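/- arXiv:2509.18534 — 7 statements merged into one kernel-verified Lean document; each statement's English description precedes it below -/
import Mathlib

section
/- Two successive left outer joins of a shared relation with independent non-shared relations do not interfere: for S : Set ρ, T₁ : Set (κ × β₁) and T₂ : Set (κ × β₂), and with the key of an extended row (s, o) : ρ × Option β₁ defined as key s, one has ((s, o₁), o₂) ∈ OJ (OJ S T₁) T₂ if and only if (s, o₁) ∈ OJ S T₁ and (s, o₂) ∈ OJ S T₂. -/
/-- Left outer join of `X : Set ρ` with `T : Set (κ × β)`, joining on `key`. -/
def OJ {ρ κ β : Type*} (key : ρ → κ) (X : Set ρ) (T : Set (κ × β)) :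
    Set (ρ × Option β) :=
  {p : ρ × Option β |
    (∃ x b, p = (x, some b) ∧ x ∈ X ∧ (key x, b) ∈ T) ∨
    (∃ x, p = (x, (none : Option β)) ∧ x ∈ X ∧ ∀ b, (key x, b) ∉ T)}

/-- Two successive left outer joins of a shared relation with independent
non-shared relations do not interfere. -/
theorem oj_oj_iff {ρ κ β₁ β₂ : Type*} (key : ρ → κ)
    (S : Set ρ) (T₁ : Set (κ × β₁)) (T₂ : Set (κ × β₂))
    (s : ρ) (o₁ : Option β₁) (o₂ : Option β₂) :
    ((s, o₁), o₂) ∈ OJ (fun p : ρ × Option β₁ => key p.1) (OJ key S T₁) T₂ ↔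
      (s, o₁) ∈ OJ key S T₁ ∧ (s, o₂) ∈ OJ key S T₂ := by
  simp only [OJ, Set.mem_setOf_eq, Prod.mk.injEq]
  constructor
  · rintro (⟨⟨x, xo⟩, b, ⟨⟨rfl, rfl⟩, rfl⟩, hx, hb⟩ | ⟨⟨x, xo⟩, ⟨⟨rfl, rfl⟩, rfl⟩, hx, hb⟩) <;>
    · simp only [Prod.mk.injEq] at hx
      refine ⟨hx, ?_⟩
      have hs : s ∈ S := by
        rcases hx with ⟨y, c, ⟨rfl, _⟩, hy, _⟩ | ⟨y, ⟨rfl, _⟩, hy, _⟩ <;> exact hy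
      first
      | exact Or.inl ⟨s, b, ⟨rfl, rfl⟩, hs, hb⟩
      | exact Or.inr ⟨s, ⟨rfl, rfl⟩, hs, hb⟩
  · rintro ⟨h1, ⟨x, b, ⟨rfl, rfl⟩, hx, hb⟩ | ⟨x, ⟨rfl, rfl⟩, hx, hb⟩⟩ <;>
    · have h1' : (∃ x b, (s, o₁) = (x, some b) ∧ x ∈ S ∧ (key x, b) ∈ T₁) ∨
          (∃ x, (s, o₁) = (x, (none : Option β₁)) ∧ x ∈ S ∧ ∀ b, (key x, b) ∉ T₁) := by
        rcases h1 with ⟨y, c, ⟨hy1, rfl⟩, hy, hc⟩ | ⟨y, ⟨hy1, rfl⟩, hy, hc⟩ <;> subst hy1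
        · exact Or.inl ⟨s, c, rfl, hy, hc⟩
        · exact Or.inr ⟨s, rfl, hy, hc⟩
      first
      | exact Or.inl ⟨(s, o₁), b, ⟨rfl, rfl⟩, h1', hb⟩
      | exact Or.inr ⟨(s, o₁), ⟨rfl, rfl⟩, h1', hb⟩
end

section
/- Left outer joins of a shared relation with independent non-shared relations can be reordered without changing the result: for S : Set ρ, T₁ : Set (κ × β₁) and T₂ : Set (κ × β₂), and with the key of an extended row (s, o) defined as key s, one has ((s, o₁), o₂) ∈ OJ (OJ S T₁) T₂ if and only if ((s, o₂), o₁) ∈ OJ (OJ S T₂) T₁. -/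
lemma mem_OJ_iff {ρ κ β : Type*} (key : ρ → κ) (X : Set ρ) (T : Set (κ × β))
    (x : ρ) (o : Option β) :
    (x, o) ∈ OJ key X T ↔
      x ∈ X ∧ ((∃ b, o = some b ∧ (key x, b) ∈ T) ∨ (o = none ∧ ∀ b, (key x, b) ∉ T)) := by
  constructor
  · rintro (⟨y, b, h, hy, ht⟩ | ⟨y, h, hy, ht⟩) <;>
      obtain ⟨rfl, rfl⟩ := Prod.mk.injEq .. ▸ h
    · exact ⟨hy, Or.inl ⟨b, rfl, ht⟩⟩
    · exact ⟨hy, Or.inr ⟨rfl, ht⟩⟩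
  · rintro ⟨hx, (⟨b, rfl, ht⟩ | ⟨rfl, ht⟩)⟩
    · exact Or.inl ⟨x, b, rfl, hx, ht⟩
    · exact Or.inr ⟨x, rfl, hx, ht⟩

/-- Left outer joins of a shared relation with independent non-shared relations
can be reordered without changing the result. -/
theorem oj_oj_comm {ρ κ β₁ β₂ : Type*} (key : ρ → κ)
    (S : Set ρ) (T₁ : Set (κ × β₁)) (T₂ : Set (κ × β₂))
    (s : ρ) (o₁ : Option β₁) (o₂ : Option β₂) :
    ((s, o₁), o₂) ∈ OJ (fun p : ρ × Option β₁ => key p.1) (OJ key S T₁) T₂ ↔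
      ((s, o₂), o₁) ∈ OJ (fun p : ρ × Option β₂ => key p.1) (OJ key S T₂) T₁ := by
  simp only [mem_OJ_iff]
  exact ⟨fun ⟨⟨h, a⟩, b⟩ => ⟨⟨h, b⟩, a⟩, fun ⟨⟨h, b⟩, a⟩ => ⟨⟨h, a⟩, b⟩⟩
end

section
/- (Binary case of the paper's Theorem 1: the merged outer-join query retrieves both original inner-join queries without loss or error.) For S : Set ρ, T₁ : Set (κ × β₁) and T₂ : Set (κ × β₂), with the key of an extended row (s, o) defined as key s, let M := OJ (OJ S T₁) T₂. Then {(s, b) : ρ × β₁ | ∃ o₂, ((s, some b), o₂) ∈ M} = {(s, b) | s ∈ S ∧ (key s, b) ∈ T₁}, and {(s, c) : ρ × β₂ | ∃ o₁, ((s, o₁), some c) ∈ M} = {(s, c) | s ∈ S ∧ (key s, c) ∈ T₂}. -/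
/-- Binary case of the paper's Theorem 1: the merged outer-join query
`M := OJ (OJ S T₁) T₂` retrieves both original inner-join queries without loss
or error. -/
theorem merged_oj_recovers_both_inner_joins {ρ κ β₁ β₂ : Type*} (key : ρ → κ)
    (S : Set ρ) (T₁ : Set (κ × β₁)) (T₂ : Set (κ × β₂)) :
    ({p : ρ × β₁ | ∃ o₂ : Option β₂,
        ((p.1, some p.2), o₂) ∈
          OJ (fun q : ρ × Option β₁ => key q.1) (OJ key S T₁) T₂} =
      {p : ρ × β₁ | p.1 ∈ S ∧ (key p.1, p.2) ∈ T₁}) ∧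
    ({p : ρ × β₂ | ∃ o₁ : Option β₁,
        ((p.1, o₁), some p.2) ∈
          OJ (fun q : ρ × Option β₁ => key q.1) (OJ key S T₁) T₂} =
      {p : ρ × β₂ | p.1 ∈ S ∧ (key p.1, p.2) ∈ T₂}) := by
  constructor
  · ext ⟨s, b⟩
    simp only [Set.mem_setOf_eq, OJ]
    constructor
    · rintro ⟨o₂, h | h⟩
      · obtain ⟨x, c, hx, hmem, -⟩ := h
        obtain ⟨rfl, rfl⟩ : (s, (some b : Option β₁)) = x ∧ o₂ = some c := by
          injection hx with h1 h2; exact ⟨h1, h2⟩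
        rcases hmem with ⟨y, d, hy, hyS, hyT⟩ | ⟨y, hy, -, -⟩
        · obtain ⟨h1, h2⟩ := Prod.mk.injEq .. ▸ hy
          subst h1; cases h2; exact ⟨hyS, hyT⟩
        · simp at hy
      · obtain ⟨x, hx, hmem, -⟩ := h
        obtain rfl : (s, (some b : Option β₁)) = x := by
          exact congrArg Prod.fst hx
        rcases hmem with ⟨y, d, hy, hyS, hyT⟩ | ⟨y, hy, -, -⟩
        · obtain ⟨h1, h2⟩ := Prod.mk.injEq .. ▸ hy
          subst h1; cases h2; exact ⟨hyS, hyT⟩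
        · simp at hy
    · rintro ⟨hS, hT⟩
      have hin : ((s, some b) : ρ × Option β₁) ∈ OJ key S T₁ :=
        Or.inl ⟨s, b, rfl, hS, hT⟩
      by_cases h2 : ∃ c, (key s, c) ∈ T₂
      · obtain ⟨c, hc⟩ := h2
        exact ⟨some c, Or.inl ⟨(s, some b), c, rfl, hin, hc⟩⟩
      · push_neg at h2
        exact ⟨none, Or.inr ⟨(s, some b), rfl, hin, h2⟩⟩
  · ext ⟨s, c⟩
    simp only [Set.mem_setOf_eq, OJ]
    constructor
    · rintro ⟨o₁, h | h⟩
      · obtain ⟨x, d, hx, hmem, hT⟩ := h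
        obtain ⟨h1, h2⟩ : ((s, o₁) : ρ × Option β₁) = x ∧ (some c : Option β₂) = some d := by
          injection hx with h1 h2; exact ⟨h1, h2⟩
        subst h1; cases h2
        rcases hmem with ⟨y, e, hy, hyS, -⟩ | ⟨y, hy, hyS, -⟩
        · obtain ⟨h1, -⟩ := Prod.mk.injEq .. ▸ hy
          subst h1; exact ⟨hyS, hT⟩
        · obtain ⟨h1, -⟩ := Prod.mk.injEq .. ▸ hy
          subst h1; exact ⟨hyS, hT⟩
      · obtain ⟨x, hx, -, -⟩ := h
        exfalso
        injection hx with h1 h2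
        simp at h2
    · rintro ⟨hS, hT⟩
      by_cases h1 : ∃ b, (key s, b) ∈ T₁
      · obtain ⟨b, hb⟩ := h1
        exact ⟨some b, Or.inl ⟨(s, some b), c, rfl, Or.inl ⟨s, b, rfl, hS, hb⟩, hT⟩⟩
      · push_neg at h1
        exact ⟨none, Or.inl ⟨(s, none), c, rfl, Or.inr ⟨s, rfl, hS, h1⟩, hT⟩⟩
end

section
/- (Per-subquery recovery from the merged query, general form.) Fix S : Set ρ, key : ρ → κ, an index type ι, payload types β : ι → Type, relations T : (i : ι) → Set (κ × β i), and let M be the merged query. Then for every index i, the set {(s, b) : ρ × β i | ∃ f, (s, f) ∈ M ∧ f i = some b} equals the inner join {(s, b) | s ∈ S ∧ (key s, b) ∈ T i}: the merged query retrieves each original single join without loss or error. -/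
/-- The merged (outer-join) query: the shared subquery `S` outer-joined with
every non-shared subquery `T i`, all joins on the shared key. -/
def Merged {ρ κ : Type*} {ι : Type*} {β : ι → Type*} (key : ρ → κ) (S : Set ρ)
    (T : (i : ι) → Set (κ × β i)) : Set (ρ × ((i : ι) → Option (β i))) :=
  {p : ρ × ((i : ι) → Option (β i)) | p.1 ∈ S ∧ ∀ i,
    (p.2 i = none ∧ ∀ b, (key p.1, b) ∉ T i) ∨
    (∃ b, p.2 i = some b ∧ (key p.1, b) ∈ T i)}

/-- Per-subquery recovery from the merged query: the merged query retrieves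
each original single join without loss or error. -/
theorem merged_recovers_each_join {ρ κ : Type*} {ι : Type*} {β : ι → Type*}
    (key : ρ → κ) (S : Set ρ) (T : (i : ι) → Set (κ × β i)) (i : ι) :
    {q : ρ × β i | ∃ f, (q.1, f) ∈ Merged key S T ∧ f i = some q.2} =
      {q : ρ × β i | q.1 ∈ S ∧ (key q.1, q.2) ∈ T i} := by
  ext ⟨s, b⟩
  simp only [Set.mem_setOf_eq]
  constructor
  · rintro ⟨f, ⟨hS, hall⟩, hfi⟩
    dsimp only at hall hS
    refine ⟨hS, ?_⟩
    rcases hall i with ⟨hn, -⟩ | ⟨b', hb', hT⟩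
    · rw [hn] at hfi; cases hfi
    · rw [hfi] at hb'
      injection hb' with h
      rwa [h]
  · rintro ⟨hS, hT⟩
    classical
    refine ⟨Function.update
        (fun j => if h : ∃ c, (key s, c) ∈ T j then some h.choose else none) i (some b),
      ⟨hS, ?_⟩, Function.update_self i _ _⟩
    intro j
    dsimp only
    by_cases hji : j = i
    · subst hji
      exact Or.inr ⟨b, Function.update_self j _ _, hT⟩
    · rw [Function.update_of_ne hji]
      by_cases h : ∃ c, (key s, c) ∈ T j
      · exact Or.inr ⟨h.choose, by simp [h], h.choose_spec⟩
      · exact Or.inl ⟨by simp [h], fun c hc => h ⟨c, hc⟩⟩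
end

section
/- (Completeness: the merged query does not filter the shared subquery.) Fix S : Set ρ, key : ρ → κ, an index type ι, payload types β : ι → Type, relations T : (i : ι) → Set (κ × β i), and let M be the merged query. Then the set {s : ρ | ∃ f, (s, f) ∈ M} equals S: every row of the shared subquery result appears in the merged query, and every row of the merged query extends a row of the shared subquery result. -/
/-- Completeness: the merged query does not filter the shared subquery. -/
theorem merged_projection_eq_shared {ρ κ : Type*} {ι : Type*} {β : ι → Type*}
    (key : ρ → κ) (S : Set ρ) (T : (i : ι) → Set (κ × β i)) :
    {s : ρ | ∃ f, (s, f) ∈ Merged key S T} = S := by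
  classical
  ext s
  constructor
  · rintro ⟨f, hS, -⟩
    exact hS
  · intro hs
    refine ⟨fun i => if h : ∃ b, (key s, b) ∈ T i then some h.choose else none, hs, fun i => ?_⟩
    by_cases h : ∃ b, (key s, b) ∈ T i
    · exact Or.inr ⟨h.choose, by simp [h], h.choose_spec⟩
    · exact Or.inl ⟨by simp [h], fun b hb => h ⟨b, hb⟩⟩
end

section
/- (Restriction/reordering property of the merged query.) Fix S : Set ρ, key : ρ → κ, an index type ι, payload types β : ι → Type, relations T : (i : ι) → Set (κ × β i), and let M be the merged query over the full index set ι. For any subset J : Set ι, let M_J denote the merged query built from the restricted family (fun (j : J) => T j) with payload types (fun (j : J) => β j). Then {(s, fun (j : J) => f j) | (s, f) ∈ M} = M_J: restricting the merged query to any subset of non-shared subqueries yields exactly the merged query over that subset (this expresses that the outer joins with non-shared subqueries can be reordered and dropped freely). -/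
/-- Restriction/reordering property of the merged query: restricting the merged
query to any subset of non-shared subqueries yields exactly the merged query
over that subset. -/
theorem merged_restrict {ρ κ : Type*} {ι : Type*} {β : ι → Type*}
    (key : ρ → κ) (S : Set ρ) (T : (i : ι) → Set (κ × β i)) (J : Set ι) :
    (fun p : ρ × ((i : ι) → Option (β i)) =>
        (p.1, fun j : J => p.2 j)) '' Merged key S T =
      Merged key S (fun j : J => T j) := by
  classical
  ext p
  constructor
  · rintro ⟨⟨s, f⟩, ⟨hS, hf⟩, rfl⟩
    exact ⟨hS, fun j => hf j⟩
  · rintro ⟨hS, hg⟩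
    obtain ⟨s, g⟩ := p
    refine ⟨(s, fun i =>
      if h : i ∈ J then g ⟨i, h⟩
      else if h' : ∃ b, (key s, b) ∈ T i then some h'.choose else none), ⟨hS, ?_⟩, ?_⟩
    · intro i
      by_cases h : i ∈ J
      · simpa [h] using hg ⟨i, h⟩
      · by_cases h' : ∃ b, (key s, b) ∈ T i
        · exact Or.inr ⟨h'.choose, by simp [h, h'], h'.choose_spec⟩
        · exact Or.inl ⟨by simp [h, h'], fun b hb => h' ⟨b, hb⟩⟩
    · simp
end

section
/- (The paper's Theorem 1, general form: the merged outer-join query retrieves every original query without loss or error.) Fix S : Set ρ, key : ρ → κ, an index type ι, payload types β : ι → Type, relations T : (i : ι) → Set (κ × β i), and let M be the merged query. Let J : Set ι be the indices of the non-shared subqueries of one original query Q, whose result is the multi-way inner join Res(Q) := {(s, g) : ρ × ((j : J) → β j) | s ∈ S ∧ ∀ (j : J), (key s, g j) ∈ T j}. Then {(s, g) : ρ × ((j : J) → β j) | ∃ f, (s, f) ∈ M ∧ ∀ (j : J), f j = some (g j)} = Res(Q): selecting the rows of the merged query that are non-null on all indices in J and projecting onto those components recovers exactly the result of Q. -/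
/-- The paper's Theorem 1, general form: the merged outer-join query retrieves
every original query without loss or error. -/
theorem merged_recovers_original_query {ρ κ : Type*} {ι : Type*} {β : ι → Type*}
    (key : ρ → κ) (S : Set ρ) (T : (i : ι) → Set (κ × β i)) (J : Set ι) :
    {q : ρ × ((j : J) → β j) | ∃ f, (q.1, f) ∈ Merged key S T ∧
        ∀ j : J, f j = some (q.2 j)} =
      {q : ρ × ((j : J) → β j) | q.1 ∈ S ∧ ∀ j : J, (key q.1, q.2 j) ∈ T j} := by
  classical
  ext ⟨s, g⟩
  simp only [Set.mem_setOf_eq]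
  constructor
  · rintro ⟨f, ⟨hS, hT⟩, hf⟩
    refine ⟨hS, fun j => ?_⟩
    rcases hT j with ⟨hn, _⟩ | ⟨b, hb, hbT⟩
    · exact absurd ((hf j).symm.trans hn) (by simp)
    · obtain rfl : g j = b := by injection (hf j).symm.trans hb
      exact hbT
  · rintro ⟨hS, hg⟩
    refine ⟨fun i => if h : i ∈ J then some (g ⟨i, h⟩)
      else if h2 : ∃ b, (key s, b) ∈ T i then some h2.choose else none,
      ⟨hS, fun i => ?_⟩, fun j => by simp [j.2]⟩
    by_cases h : i ∈ J
    · exact Or.inr ⟨g ⟨i, h⟩, by simp [h], hg ⟨i, h⟩⟩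
    · by_cases h2 : ∃ b, (key s, b) ∈ T i
      · exact Or.inr ⟨h2.choose, by simp [h, h2], h2.choose_spec⟩
      · exact Or.inl ⟨by simp [h, h2], fun b hb => h2 ⟨b, hb⟩⟩
end
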